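/- Let K ≥ 2 and let η : {1,…,K} × {1,…,K} → (0,∞) be given, writing η_{k→ℓ} := η(k,ℓ). There exists θ ∈ Δ satisfying θ_ℓ ≤ η_{k→ℓ} · θ_k for all k, ℓ ∈ {1,…,K} (necessarily with all θ_k > 0) if and only if for every L ≥ 1 and all indices j_1,…,j_L ∈ {1,…,K}, the cyclic product η_{j_1→j_2} · η_{j_2→j_3} ⋯ η_{j_{L−1}→j_L} · η_{j_L→j_1} ≥ 1. -/

import Mathlib

noncomputable section

namespace Stmt6Aux

open Finset

variable {K : ℕ} [NeZero K] (η : Fin K → Fin K → ℝ)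

/-- Weight of a path `j 0 → j 1 → ⋯ → j m`. -/
def wt (m : ℕ) (j : Fin (m + 1) → Fin K) : ℝ :=
  ∏ i : Fin m, η (j i.castSucc) (j i.succ)

/-- Set of weights of paths from `0` to `ℓ`. -/
def S (ℓ : Fin K) : Set ℝ :=
  {x | ∃ m, ∃ j : Fin (m + 1) → Fin K, j 0 = 0 ∧ j (Fin.last m) = ℓ ∧ wt η m j = x}

lemma S_nonempty (ℓ : Fin K) : (S η ℓ).Nonempty := by
  refine ⟨η 0 ℓ, 1, ![0, ℓ], rfl, rfl, ?_⟩
  simp [wt]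

/-- Cyclic product identity: closing a path gives a cycle. -/
lemma cycle_split (m : ℕ) (j : Fin (m + 1) → Fin K) :
    ∏ i : Fin (m + 1), η (j i) (j (i + 1)) = wt η m j * η (j (Fin.last m)) (j 0) := by
  rw [Fin.prod_univ_castSucc, Fin.last_add_one]
  congr 1
  unfold wt
  refine Finset.prod_congr rfl fun i _ => ?_
  rw [Fin.coeSucc_eq_succ]

lemma lb_of_cyc
    (hcyc : ∀ (L : ℕ) (j : Fin (L + 1) → Fin K),
      1 ≤ ∏ i : Fin (L + 1), η (j i) (j (i + 1)))
    (hpos : ∀ k ℓ, 0 < η k ℓ) (ℓ : Fin K) :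
    ∀ x ∈ S η ℓ, (η ℓ 0)⁻¹ ≤ x := by
  rintro x ⟨m, j, hj0, hjl, rfl⟩
  have h := hcyc m j
  rw [cycle_split, hj0, hjl] at h
  rw [inv_eq_one_div, div_le_iff₀ (hpos ℓ 0)]
  linarith

lemma bellman_aux (hpos : ∀ k ℓ, 0 < η k ℓ) (k ℓ : Fin K) :
    ∀ x ∈ S η k, η k ℓ * x ∈ S η ℓ := by
  rintro x ⟨m, j, hj0, hjl, rfl⟩
  rw [mul_comm]
  refine ⟨m + 1, Fin.snoc j ℓ, ?_, ?_, ?_⟩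
  · rw [show (0 : Fin (m + 2)) = Fin.castSucc 0 by rfl, Fin.snoc_castSucc, hj0]
  · simp
  · unfold wt
    rw [Fin.prod_univ_castSucc]
    congr 1
    · refine Finset.prod_congr rfl fun i _ => ?_
      rw [Fin.succ_castSucc, Fin.snoc_castSucc, Fin.snoc_castSucc]
    · rw [Fin.succ_last, Fin.snoc_last, Fin.snoc_castSucc, hjl]

end Stmt6Aux

open Stmt6Aux in
theorem stmt6 (K : ℕ) (hK : 2 ≤ K) (η : Fin K → Fin K → ℝ)
    (hpos : ∀ k ℓ, 0 < η k ℓ) :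
    (∃ θ ∈ stdSimplex ℝ (Fin K), ∀ k ℓ, θ ℓ ≤ η k ℓ * θ k) ↔
      (∀ (L : ℕ) (j : Fin (L + 1) → Fin K),
        1 ≤ ∏ i : Fin (L + 1), η (j i) (j (i + 1))) := by
  haveI : NeZero K := ⟨by omega⟩
  constructor
  · rintro ⟨θ, ⟨hθ0, hθ1⟩, hθ⟩ L j
    -- all coordinates positive
    have hex : ∃ m, 0 < θ m := by
      by_contra h
      push_neg at h
      have : ∑ m, θ m ≤ 0 := Finset.sum_nonpos fun m _ => h m
      rw [hθ1] at this; linarith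
    obtain ⟨m, hm⟩ := hex
    have hall : ∀ k, 0 < θ k := by
      intro k
      rcases lt_or_eq_of_le (hθ0 k) with h | h
      · exact h
      · exfalso
        have := hθ k m
        rw [← h] at this
        nlinarith [hpos k m]
    -- telescoping
    have hP : 0 < ∏ i : Fin (L + 1), θ (j i) :=
      Finset.prod_pos fun i _ => hall _
    have key : ∏ i : Fin (L + 1), θ (j i) ≤
        (∏ i : Fin (L + 1), η (j i) (j (i + 1))) * ∏ i : Fin (L + 1), θ (j i) := by
      calc ∏ i : Fin (L + 1), θ (j i)
          = ∏ i : Fin (L + 1), θ (j (i + 1)) := by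
            exact (Equiv.prod_comp (Equiv.addRight (1 : Fin (L + 1))) fun i => θ (j i)).symm
        _ ≤ ∏ i : Fin (L + 1), (η (j i) (j (i + 1)) * θ (j i)) :=
            Finset.prod_le_prod (fun i _ => (hall _).le) (fun i _ => hθ _ _)
        _ = (∏ i : Fin (L + 1), η (j i) (j (i + 1))) * ∏ i : Fin (L + 1), θ (j i) :=
            Finset.prod_mul_distrib
    exact (le_mul_iff_one_le_left hP).mp key
  · intro hcyc
    set d : Fin K → ℝ := fun ℓ => sInf (S η ℓ) with hd
    have hdlb : ∀ ℓ, (η ℓ 0)⁻¹ ≤ d ℓ := fun ℓ =>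
      le_csInf (S_nonempty η ℓ) (lb_of_cyc η hcyc hpos ℓ)
    have hdpos : ∀ ℓ, 0 < d ℓ := fun ℓ =>
      lt_of_lt_of_le (inv_pos.mpr (hpos ℓ 0)) (hdlb ℓ)
    have hbdd : ∀ ℓ, BddBelow (S η ℓ) := fun ℓ =>
      ⟨(η ℓ 0)⁻¹, lb_of_cyc η hcyc hpos ℓ⟩
    have hbell : ∀ k ℓ, d ℓ ≤ η k ℓ * d k := by
      intro k ℓ
      rw [← div_le_iff₀' (hpos k ℓ)]
      refine le_csInf (S_nonempty η k) fun x hx => ?_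
      rw [div_le_iff₀' (hpos k ℓ)]
      exact csInf_le (hbdd ℓ) (bellman_aux η hpos k ℓ x hx)
    set T : ℝ := ∑ ℓ, d ℓ with hT
    have hTpos : 0 < T := Finset.sum_pos (fun ℓ _ => hdpos ℓ) ⟨0, Finset.mem_univ 0⟩
    refine ⟨fun ℓ => d ℓ / T, ⟨fun ℓ => div_nonneg (hdpos ℓ).le hTpos.le, ?_⟩, ?_⟩
    · rw [← Finset.sum_div, div_self hTpos.ne']
    · intro k ℓ
      show d ℓ / T ≤ η k ℓ * (d k / T)
      rw [← mul_div_assoc]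
      gcongr
      exact hbell k ℓ
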